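/- Let V be a graded commutative associative algebra over a field k of characteristic zero, and let Δ : V → V be a linear operator of degree -1 that is a differential operator of order ≤ 2 (i.e., [[[Δ, L_a], L_b], L_c] = 0 for all a,b,c ∈ V, where L_a denotes left multiplication by a) with Δ(1) = 0 and Δ² = 0. Define the antibracket {a,b} := (-1)^{|a|}(Δ(ab) - (Δa)b - (-1)^{|a|} a(Δb)). Then {-,-} satisfies the graded Jacobi identity for a Lie bracket of degree -1, i.e., {a,{b,c}} = {{a,b},c} + (-1)^{(|a|+1)(|b|+1)} {b,{a,c}} for all homogeneous a,b,c ∈ V. -/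
import Mathlib


/-!
STATEMENT 0: For a ℤ-graded (super)commutative algebra `V` over a field `k` of
characteristic zero, with a degree `-1` second-order differential operator `Δ`
(`[[[Δ,L_a],L_b],L_c] = 0`, graded commutators) satisfying `Δ 1 = 0` and `Δ² = 0`,
the antibracket `{a,b} = (-1)^{|a|}(Δ(ab) - (Δa)b - (-1)^{|a|} a (Δb))` satisfies
the graded Jacobi identity for a Lie bracket of degree `-1`.
-/

/-- The graded commutator `[X, L_a]` of an operator `X` of degree `ε` with the operator of
left multiplication by a homogeneous element `a` of degree `i`, as an operator `V → V`. -/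
noncomputable def gcomm (k : Type*) [Field k] {V : Type*} [Ring V] [Algebra k V]
    (ε : ℤ) (X : V → V) (i : ℤ) (a : V) : V → V :=
  fun x => X (a * x) - ((-1 : k) ^ (ε * i)) • (a * X x)

/-- The BV antibracket `{a,b} := (-1)^{|a|} (Δ(ab) - (Δa)b - (-1)^{|a|} a (Δb))`
for `a` homogeneous of degree `i`. -/
noncomputable def antibracket (k : Type*) [Field k] {V : Type*} [Ring V] [Algebra k V]
    (Δ : V → V) (i : ℤ) (a b : V) : V :=
  ((-1 : k) ^ i) • (Δ (a * b) - Δ a * b - ((-1 : k) ^ i) • (a * Δ b))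

section BV
variable {k V : Type*} [Field k] [Ring V] [Algebra k V]

lemma bvEmul (m n : ℤ) : (-1:k)^m * (-1:k)^n = (-1:k)^(m+n) :=
  (zpow_add₀ (by norm_num) m n).symm

lemma bvEeq (m n c : ℤ) (h : m = n + 2*c) : ((-1:k))^m = (-1:k)^n := by
  subst h
  rw [zpow_add₀ (by norm_num : (-1:k) ≠ 0), zpow_mul]
  norm_num

lemma bvEsq (n : ℤ) : ((-1:k)^n)^2 = 1 := by
  rw [sq, bvEmul, bvEeq (n+n) 0 n (by ring), zpow_zero]

lemma bvEcube (n : ℤ) : ((-1:k)^n)^3 = (-1:k)^n := by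
  rw [pow_succ, bvEsq, one_mul]

lemma bvE4 (n : ℤ) : ((-1:k)^n)^4 = 1 := by
  rw [pow_succ, bvEcube, bvEmul, bvEeq (n+n) 0 n (by ring), zpow_zero]

lemma bvLB (Δ : V →ₗ[k] V) (hsq : ∀ x, Δ (Δ x) = 0) (i : ℤ) (a x : V) :
    Δ (antibracket k (⇑Δ) i a x)
      = antibracket k (⇑Δ) (i-1) (Δ a) x - ((-1:k)^i) • antibracket k (⇑Δ) i a (Δ x) := by
  have h1 : ((-1:k))^(i-1) = -(-1:k)^i := by
    rw [bvEeq (i-1) (i+1) (-1) (by ring), ← bvEmul, zpow_one]; ring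
  simp only [antibracket, map_sub, map_smul, hsq, h1, zero_mul, mul_zero, smul_zero,
    sub_zero, zero_sub]
  match_scalars <;> (ring_nf; try simp [bvEsq, bvEcube, bvE4]; try ring)

lemma bvLD (Δ : V →ₗ[k] V) (m : ℤ) (u v : V) :
    Δ (u * v) = ((-1:k)^m) • antibracket k (⇑Δ) m u v + Δ u * v + ((-1:k)^m) • (u * Δ v) := by
  simp only [antibracket]
  match_scalars <;> (ring_nf; try simp [bvEsq, bvEcube, bvE4]; try ring)

lemma bvBsub (Δ : V →ₗ[k] V) (i : ℤ) (a : V) (x y : V) :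
    antibracket k (⇑Δ) i a (x - y)
      = antibracket k (⇑Δ) i a x - antibracket k (⇑Δ) i a y := by
  simp only [antibracket, map_sub, mul_sub]
  module

lemma bvBsmul (Δ : V →ₗ[k] V) (i : ℤ) (a : V) (s : k) (x : V) :
    antibracket k (⇑Δ) i a (s • x) = s • antibracket k (⇑Δ) i a x := by
  simp only [antibracket, map_smul, mul_smul_comm]
  module

lemma bvSeven {𝒜 : ℤ → Submodule k V} (Δ : V →ₗ[k] V)
    (hone : Δ 1 = 0)
    (horder2 : ∀ (i j l : ℤ), ∀ a ∈ 𝒜 i, ∀ b ∈ 𝒜 j, ∀ c ∈ 𝒜 l, ∀ x : V,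
      gcomm k (i + j - 1) (gcomm k (i - 1) (gcomm k (-1) (⇑Δ) i a) j b) l c x = 0)
    (i j l : ℤ) (u : V) (hu : u ∈ 𝒜 i) (v : V) (hv : v ∈ 𝒜 j) (w : V) (hw : w ∈ 𝒜 l) :
    Δ (u * (v * w)) =
      ((-1:k)^i) • (u * Δ (v * w))
      + ((-1:k)^(i*j) * (-1:k)^j) • (v * Δ (u * w))
      + ((-1:k)^(i*l) * (-1:k)^(j*l) * (-1:k)^l) • (w * Δ (u * v))
      - ((-1:k)^(i*j) * (-1:k)^j * (-1:k)^i) • (v * (u * Δ w))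
      - ((-1:k)^(i*l) * (-1:k)^(j*l) * (-1:k)^l * (-1:k)^i) • (w * (u * Δ v))
      - ((-1:k)^(i*l) * (-1:k)^(j*l) * (-1:k)^l * (-1:k)^(i*j) * (-1:k)^j) • (w * (v * Δ u)) := by
  have cva : ((-1:k))^(-1*i) = (-1:k)^i := bvEeq (-1*i) i (-i) (by ring)
  have cvb : ((-1:k))^((i-1)*j) = (-1:k)^(i*j) * (-1:k)^j := by
    rw [bvEeq ((i-1)*j) (i*j + j) (-j) (by ring), ← bvEmul]
  have cvc : ((-1:k))^((i+j-1)*l) = (-1:k)^(i*l) * (-1:k)^(j*l) * (-1:k)^l := by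
    rw [bvEeq ((i+j-1)*l) (i*l + j*l + l) (-l) (by ring), ← bvEmul, ← bvEmul]
  have h := horder2 i j l u hu v hv w hw 1
  simp only [gcomm, mul_one, hone, mul_zero, smul_zero, sub_zero] at h
  rw [cva, cvb, cvc] at h
  simp only [mul_sub, mul_smul_comm, smul_sub, smul_smul] at h
  rw [← sub_eq_zero, ← h]
  match_scalars <;> (ring_nf; try simp [bvEsq, bvEcube, bvE4]; try ring)
lemma bvLA {𝒜 : ℤ → Submodule k V} [GradedAlgebra 𝒜]
    (hcomm : ∀ (i j : ℤ), ∀ a ∈ 𝒜 i, ∀ b ∈ 𝒜 j, a * b = ((-1 : k) ^ (i * j)) • (b * a))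
    (Δ : V →ₗ[k] V)
    (hdeg : ∀ (i : ℤ), ∀ a ∈ 𝒜 i, Δ a ∈ 𝒜 (i - 1))
    (hone : Δ 1 = 0)
    (horder2 : ∀ (i j l : ℤ), ∀ a ∈ 𝒜 i, ∀ b ∈ 𝒜 j, ∀ c ∈ 𝒜 l, ∀ x : V,
      gcomm k (i + j - 1) (gcomm k (i - 1) (gcomm k (-1) (⇑Δ) i a) j b) l c x = 0)
    (i m n : ℤ) (a : V) (ha : a ∈ 𝒜 i) (x : V) (hx : x ∈ 𝒜 m) (y : V) (hy : y ∈ 𝒜 n) :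
    antibracket k (⇑Δ) i a (x * y)
      = antibracket k (⇑Δ) i a x * y
        + ((-1:k)^(i*m) * (-1:k)^m) • (x * antibracket k (⇑Δ) i a y) := by
  have hDax : Δ (a * x) ∈ 𝒜 (i + m - 1) := hdeg _ _ (SetLike.mul_mem_graded ha hx)
  have haDx : a * Δ x ∈ 𝒜 (i + (m - 1)) := SetLike.mul_mem_graded ha (hdeg m x hx)
  have hDa : Δ a ∈ 𝒜 (i - 1) := hdeg i a ha
  have hxy : x * y ∈ 𝒜 (m + n) := SetLike.mul_mem_graded hx hy
  have r1 : Δ (a * x) * y = ((-1:k)^((i + m - 1)*n)) • (y * Δ (a * x)) :=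
    hcomm _ n _ hDax y hy
  have r2 : a * Δ x * y = ((-1:k)^((i + (m - 1))*n)) • (y * (a * Δ x)) :=
    hcomm _ n _ haDx y hy
  have r3 : Δ a * (x * y) = ((-1:k)^((i-1)*(m+n))) • (x * (y * Δ a)) := by
    rw [hcomm (i-1) (m+n) (Δ a) hDa (x*y) hxy, mul_assoc]
  have r5 : Δ a * y = ((-1:k)^((i-1)*n)) • (y * Δ a) := hcomm _ _ _ hDa y hy
  have r6 : y * (x * Δ a) = ((-1:k)^(n*m)) • (x * (y * Δ a)) := by
    rw [← mul_assoc, hcomm n m y hy x hx, smul_mul_assoc, mul_assoc]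
  -- sign conversions
  have cv1 : ((-1:k))^((i + m - 1)*n) = (-1:k)^(i*n) * (-1:k)^(m*n) * (-1:k)^n := by
    rw [bvEeq ((i+m-1)*n) (i*n + m*n + n) (-n) (by ring), ← bvEmul, ← bvEmul]
  have cv2 : ((-1:k))^((i + (m - 1))*n) = (-1:k)^(i*n) * (-1:k)^(m*n) * (-1:k)^n := by
    rw [bvEeq ((i+(m-1))*n) (i*n + m*n + n) (-n) (by ring), ← bvEmul, ← bvEmul]
  have cv3 : ((-1:k))^((i-1)*(m+n))
      = (-1:k)^(i*m) * (-1:k)^(i*n) * (-1:k)^m * (-1:k)^n := by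
    rw [bvEeq ((i-1)*(m+n)) (i*m + i*n + m + n) (-m-n) (by ring), ← bvEmul, ← bvEmul, ← bvEmul]
  have cv4 : ((-1:k))^((i-1)*n) = (-1:k)^(i*n) * (-1:k)^n := by
    rw [bvEeq ((i-1)*n) (i*n + n) (-n) (by ring), ← bvEmul]
  have cv5 : ((-1:k))^(n*m) = (-1:k)^(m*n) := bvEeq (n*m) (m*n) 0 (by ring)
  rw [cv1] at r1; rw [cv2] at r2; rw [cv3] at r3; rw [cv4] at r5; rw [cv5] at r6
  simp only [antibracket]
  rw [bvSeven Δ hone horder2 i m n a ha x hx y hy]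
  simp only [smul_sub, sub_mul, smul_mul_assoc, mul_sub, mul_smul_comm, smul_smul]
  rw [mul_assoc (Δ a) x y]
  rw [r1, r2, r3, r5, r6]
  simp only [smul_sub, sub_mul, smul_mul_assoc, mul_sub, mul_smul_comm, smul_smul]
  match_scalars <;> (ring_nf; try simp [bvEsq, bvEcube, bvE4]; try ring)
end BV

theorem antibracket_graded_jacobi
    {k V : Type*} [Field k] [CharZero k] [Ring V] [Algebra k V]
    (𝒜 : ℤ → Submodule k V) [GradedAlgebra 𝒜]
    -- graded commutativity
    (hcomm : ∀ (i j : ℤ), ∀ a ∈ 𝒜 i, ∀ b ∈ 𝒜 j, a * b = ((-1 : k) ^ (i * j)) • (b * a))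
    (Δ : V →ₗ[k] V)
    -- Δ has degree -1
    (hdeg : ∀ (i : ℤ), ∀ a ∈ 𝒜 i, Δ a ∈ 𝒜 (i - 1))
    -- Δ kills the unit and squares to zero
    (hone : Δ 1 = 0)
    (hsq : ∀ x, Δ (Δ x) = 0)
    -- Δ is a differential operator of order ≤ 2: [[[Δ, L_a], L_b], L_c] = 0
    (horder2 : ∀ (i j l : ℤ), ∀ a ∈ 𝒜 i, ∀ b ∈ 𝒜 j, ∀ c ∈ 𝒜 l, ∀ x : V,
      gcomm k (i + j - 1) (gcomm k (i - 1) (gcomm k (-1) (⇑Δ) i a) j b) l c x = 0) :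
    -- graded Jacobi identity for the degree -1 bracket
    ∀ (i j l : ℤ), ∀ a ∈ 𝒜 i, ∀ b ∈ 𝒜 j, ∀ c ∈ 𝒜 l,
      antibracket k (⇑Δ) i a (antibracket k (⇑Δ) j b c) =
        antibracket k (⇑Δ) (i + j - 1) (antibracket k (⇑Δ) i a b) c +
          ((-1 : k) ^ ((i + 1) * (j + 1))) •
            antibracket k (⇑Δ) j b (antibracket k (⇑Δ) i a c) := by
  intro i j l a ha b hb c hc
  have hDa : Δ a ∈ 𝒜 (i - 1) := hdeg i a ha
  have hDb : Δ b ∈ 𝒜 (j - 1) := hdeg j b hb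
  have hDc : Δ c ∈ 𝒜 (l - 1) := hdeg l c hc
  have laabc := bvLA hcomm Δ hdeg hone horder2 i j l a ha b hb c hc
  have laDabc := bvLA hcomm Δ hdeg hone horder2 (i-1) j l (Δ a) hDa b hb c hc
  have laDb := bvLA hcomm Δ hdeg hone horder2 i (j-1) l a ha (Δ b) hDb c hc
  have labDc := bvLA hcomm Δ hdeg hone horder2 i j (l-1) a ha b hb (Δ c) hDc
  have LBab := bvLB Δ hsq i a b
  have LBac := bvLB Δ hsq i a c
  have e1 : antibracket k (⇑Δ) i a (Δ (b*c))
      = ((-1:k)^i) • (antibracket k (⇑Δ) (i-1) (Δ a) (b*c)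
          - Δ (antibracket k (⇑Δ) i a (b*c))) := by
    rw [bvLB Δ hsq i a (b*c)]
    match_scalars <;> (ring_nf; try simp [bvEsq, bvEcube, bvE4]; try ring)
  have LD1 := bvLD Δ (i+j-1) (antibracket k (⇑Δ) i a b) c
  have LD2 := bvLD Δ j b (antibracket k (⇑Δ) i a c)
  have hBbc : antibracket k (⇑Δ) j b c
      = ((-1:k)^j) • (Δ (b*c) - Δ b * c - ((-1:k)^j) • (b * Δ c)) := rfl
  -- sign conversions
  have cvA : ((-1:k))^((i-1)*j) = (-1:k)^(i*j) * (-1:k)^j := by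
    rw [bvEeq ((i-1)*j) (i*j + j) (-j) (by ring), ← bvEmul]
  have cvB : ((-1:k))^(i*(j-1)) = (-1:k)^(i*j) * (-1:k)^i := by
    rw [bvEeq (i*(j-1)) (i*j + i) (-i) (by ring), ← bvEmul]
  have cvC : ((-1:k))^(j-1) = -(-1:k)^j := by
    rw [bvEeq (j-1) (j+1) (-1) (by ring), ← bvEmul, zpow_one]; ring
  have cvD : ((-1:k))^(i+j-1) = -((-1:k)^i * (-1:k)^j) := by
    rw [bvEeq (i+j-1) (i+(j+1)) (-1) (by ring), ← bvEmul, ← bvEmul, zpow_one]; ring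
  have cvE : ((-1:k))^((i+1)*(j+1)) = -((-1:k)^(i*j) * (-1:k)^i * (-1:k)^j) := by
    rw [bvEeq ((i+1)*(j+1)) (i*j + (i + (j+1))) 0 (by ring), ← bvEmul, ← bvEmul, ← bvEmul,
      zpow_one]; ring
  rw [hBbc, bvBsmul, bvBsub, bvBsub, bvBsmul]
  rw [e1, laabc, map_add, map_smul, LD1, LD2, LBab, LBac, laDabc, laDb, labDc]
  simp only [cvA, cvB, cvC, cvD, cvE]
  simp only [smul_sub, smul_add, sub_mul, add_mul, smul_mul_assoc, mul_sub, mul_add,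
    mul_smul_comm, smul_smul]
  match_scalars <;> (ring_nf; try simp [bvEsq, bvEcube, bvE4]; try ring)
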